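/- For every shape parameter λ > 0 and every x > 0, the Mills ratio of the skew normal distribution satisfies the lower bound (1 - F_λ(x)) / f_λ(x) > x^{-1} (1 + x^{-2})^{-1}. -/

import Mathlib

open Real MeasureTheory Filter Topology

/-- Standard normal density. -/
noncomputable def stdPhi (x : ℝ) : ℝ := (Real.sqrt (2 * Real.pi))⁻¹ * Real.exp (-(x ^ 2) / 2)

/-- Standard normal cdf. -/
noncomputable def stdCdf (x : ℝ) : ℝ := ∫ t in Set.Iic x, stdPhi t

/-- Skew normal density with shape parameter l. -/
noncomputable def snPdf (l x : ℝ) : ℝ := 2 * stdPhi x * stdCdf (l * x)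

/-- Skew normal cdf with shape parameter l. -/
noncomputable def snCdf (l x : ℝ) : ℝ := ∫ t in Set.Iic x, snPdf l t

/-- Gumbel extreme value distribution function. -/
noncomputable def gumbel (x : ℝ) : ℝ := Real.exp (-Real.exp (-x))


lemma stdPhi_pos (x : ℝ) : 0 < stdPhi x := by
  unfold stdPhi
  have := Real.pi_pos
  positivity

lemma stdPhi_cont : Continuous stdPhi := by unfold stdPhi; fun_prop

lemma stdPhi_eq : stdPhi = fun x => (Real.sqrt (2 * Real.pi))⁻¹ * Real.exp (-(1/2 : ℝ) * x ^ 2) := by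
  funext x; unfold stdPhi; ring_nf

lemma stdPhi_integrable : Integrable stdPhi := by
  rw [stdPhi_eq]
  exact (integrable_exp_neg_mul_sq (by norm_num)).const_mul _

lemma stdPhi_integral : ∫ x, stdPhi x = 1 := by
  rw [stdPhi_eq, integral_const_mul, integral_gaussian,
    show Real.pi / (1/2 : ℝ) = 2 * Real.pi by ring]
  exact inv_mul_cancel₀ (by positivity)

lemma stdPhi_even (x : ℝ) : stdPhi (-x) = stdPhi x := by unfold stdPhi; rw [neg_sq]

lemma hasDerivAt_stdPhi (x : ℝ) : HasDerivAt stdPhi (-x * stdPhi x) x := by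
  have h1 : HasDerivAt (fun y : ℝ => -(y ^ 2) / 2) (-x) x := by
    have := ((hasDerivAt_pow 2 x).neg).div_const 2
    refine this.congr_deriv ?_
    simp; ring
  have h2 := (h1.exp).const_mul (Real.sqrt (2 * Real.pi))⁻¹
  refine h2.congr_deriv ?_
  unfold stdPhi; ring

lemma hasDerivAt_stdCdf (x : ℝ) : HasDerivAt stdCdf (stdPhi x) x := by
  have heq : stdCdf = fun y => stdCdf 0 + ∫ t in (0:ℝ)..y, stdPhi t := by
    funext y
    rw [← intervalIntegral.integral_Iic_sub_Iic stdPhi_integrable.integrableOn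
      stdPhi_integrable.integrableOn]
    unfold stdCdf; ring
  rw [heq]
  have H : HasDerivAt (fun y => ∫ t in (0:ℝ)..y, stdPhi t) (stdPhi x) x :=
    intervalIntegral.integral_hasDerivAt_right stdPhi_integrable.intervalIntegrable
      stdPhi_cont.stronglyMeasurable.stronglyMeasurableAtFilter stdPhi_cont.continuousAt
  exact H.const_add _

lemma stdCdf_pos (x : ℝ) : 0 < stdCdf x := by
  unfold stdCdf
  rw [setIntegral_pos_iff_support_of_nonneg_ae
    (ae_of_all _ fun t => (stdPhi_pos t).le) stdPhi_integrable.integrableOn]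
  have : Function.support stdPhi = Set.univ := by
    ext t; simp [Function.mem_support, (stdPhi_pos t).ne']
  rw [this, Set.univ_inter, Real.volume_Iic]
  simp

lemma stdCdf_le_one (x : ℝ) : stdCdf x ≤ 1 := by
  rw [← stdPhi_integral]
  exact setIntegral_le_integral stdPhi_integrable (ae_of_all _ fun t => (stdPhi_pos t).le)

lemma stdCdf_neg (x : ℝ) : stdCdf (-x) = ∫ t in Set.Ioi x, stdPhi t := by
  have h := integral_comp_neg_Iic (-x) stdPhi
  rw [neg_neg] at h
  rw [← h]
  unfold stdCdf
  exact setIntegral_congr_fun measurableSet_Iic fun t _ => (stdPhi_even t).symm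

lemma stdCdf_add (x : ℝ) : stdCdf x + stdCdf (-x) = 1 := by
  rw [stdCdf_neg]
  unfold stdCdf
  rw [intervalIntegral.integral_Iic_add_Ioi stdPhi_integrable.integrableOn stdPhi_integrable.integrableOn,
    stdPhi_integral]

lemma stdCdf_cont : Continuous stdCdf :=
  continuous_iff_continuousAt.2 fun x => (hasDerivAt_stdCdf x).continuousAt

lemma snPdf_pos (l x : ℝ) : 0 < snPdf l x := by
  have h1 := stdPhi_pos x
  have h2 := stdCdf_pos (l * x)
  unfold snPdf; positivity

lemma snPdf_cont (l : ℝ) : Continuous (snPdf l) := by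
  unfold snPdf
  exact (continuous_const.mul stdPhi_cont).mul (stdCdf_cont.comp (continuous_const.mul continuous_id))

lemma snPdf_le (l x : ℝ) : snPdf l x ≤ 2 * stdPhi x := by
  have h1 := stdPhi_pos x
  have h2 := stdCdf_le_one (l * x)
  unfold snPdf; nlinarith

lemma snPdf_integrable (l : ℝ) : Integrable (snPdf l) := by
  refine (stdPhi_integrable.const_mul 2).mono (snPdf_cont l).aestronglyMeasurable
    (ae_of_all _ fun x => ?_)
  rw [Real.norm_eq_abs, Real.norm_eq_abs, abs_of_pos (snPdf_pos l x),
    abs_of_pos (by have := stdPhi_pos x; positivity)]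
  exact snPdf_le l x

lemma integrable_phi_mul (l : ℝ) (s : ℝ) :
    Integrable (fun x => stdPhi x * stdCdf (s * x)) := by
  refine stdPhi_integrable.mono ((stdPhi_cont.mul (stdCdf_cont.comp (continuous_const.mul continuous_id))).aestronglyMeasurable) (ae_of_all _ fun x => ?_)
  have h1 := stdPhi_pos x
  have h2 := stdCdf_pos (s * x)
  have h3 := stdCdf_le_one (s * x)
  rw [Real.norm_eq_abs, Real.norm_eq_abs, abs_of_pos (by positivity), abs_of_pos h1]
  nlinarith

lemma snPdf_total (l : ℝ) : ∫ x, snPdf l x = 1 := by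
  have h1 := integrable_phi_mul l l
  have h2 := integrable_phi_mul l (-l)
  have key : ∫ x, stdPhi x * stdCdf (-l * x) = ∫ x, stdPhi x * stdCdf (l * x) := by
    rw [← integral_neg_eq_self (fun x => stdPhi x * stdCdf (l * x))]
    congr 1; funext x
    rw [stdPhi_even]
    ring_nf
  have e1 : ∫ x, snPdf l x
      = (∫ x, stdPhi x * stdCdf (l * x)) + ∫ x, stdPhi x * stdCdf (-l * x) := by
    rw [key, ← integral_add h1 h1]
    congr 1; funext x; unfold snPdf; ring
  rw [e1, ← integral_add h1 h2, ← stdPhi_integral]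
  congr 1; funext x
  have h := stdCdf_add (l * x)
  rw [show -l * x = -(l * x) by ring]
  nlinarith [stdPhi_pos x]

lemma hasDerivAt_snCdf (l x : ℝ) : HasDerivAt (snCdf l) (snPdf l x) x := by
  have heq : snCdf l = fun y => snCdf l 0 + ∫ t in (0:ℝ)..y, snPdf l t := by
    funext y
    rw [← intervalIntegral.integral_Iic_sub_Iic (snPdf_integrable l).integrableOn
      (snPdf_integrable l).integrableOn]
    unfold snCdf; ring
  rw [heq]
  have H : HasDerivAt (fun y => ∫ t in (0:ℝ)..y, snPdf l t) (snPdf l x) x :=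
    intervalIntegral.integral_hasDerivAt_right (snPdf_integrable l).intervalIntegrable
      (snPdf_cont l).stronglyMeasurable.stronglyMeasurableAtFilter (snPdf_cont l).continuousAt
  exact H.const_add _

lemma snCdf_tendsto (l : ℝ) : Tendsto (snCdf l) atTop (𝓝 1) := by
  have h := MeasureTheory.intervalIntegral_tendsto_integral_Ioi 0
    (snPdf_integrable l).integrableOn tendsto_id
  have heq : ∀ y, snCdf l y = snCdf l 0 + ∫ t in (0:ℝ)..y, snPdf l t := fun y => by
    rw [← intervalIntegral.integral_Iic_sub_Iic (snPdf_integrable l).integrableOn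
      (snPdf_integrable l).integrableOn]
    unfold snCdf; ring
  have htot : snCdf l 0 + ∫ t in Set.Ioi (0:ℝ), snPdf l t = 1 := by
    unfold snCdf
    rw [intervalIntegral.integral_Iic_add_Ioi (snPdf_integrable l).integrableOn
      (snPdf_integrable l).integrableOn, snPdf_total]
  have h2 := h.const_add (snCdf l 0)
  rw [htot] at h2
  exact h2.congr fun y => (heq y).symm

lemma stdPhi_tendsto : Tendsto stdPhi atTop (𝓝 0) := by
  rw [stdPhi_eq]
  have h1 : Tendsto (fun x : ℝ => -(1/2 : ℝ) * x ^ 2) atTop atBot := by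
    apply Tendsto.const_mul_atTop_of_neg (by norm_num)
    exact tendsto_pow_atTop (by norm_num) |>.comp tendsto_id |>.congr (fun x => rfl)
  have h2 := Real.tendsto_exp_atBot.comp h1
  have h3 := h2.const_mul (Real.sqrt (2 * Real.pi))⁻¹
  simpa using h3
lemma hasDerivAt_snPdf (l x : ℝ) :
    HasDerivAt (snPdf l) (-x * snPdf l x + 2 * l * stdPhi x * stdPhi (l * x)) x := by
  have h1 : HasDerivAt (fun y => 2 * stdPhi y) (2 * (-x * stdPhi x)) x :=
    (hasDerivAt_stdPhi x).const_mul 2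
  have hi : HasDerivAt (fun y : ℝ => l * y) l x := by
    simpa using (hasDerivAt_id x).const_mul l
  have h2 : HasDerivAt (fun y => stdCdf (l * y)) (stdPhi (l * x) * l) x :=
    (hasDerivAt_stdCdf (l * x)).comp x hi
  have h3 := h1.mul h2
  refine h3.congr_deriv ?_
  simp only [snPdf]; ring

lemma hasDerivAt_G (l t : ℝ) :
    HasDerivAt (fun y : ℝ => 1 - snCdf l y - y / (1 + y ^ 2) * snPdf l y)
      (-(2 * snPdf l t / (1 + t ^ 2) ^ 2
        + 2 * l * t * stdPhi t * stdPhi (l * t) / (1 + t ^ 2))) t := by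
  have hne : (1 + t ^ 2 : ℝ) ≠ 0 := by positivity
  have hden : HasDerivAt (fun y : ℝ => 1 + y ^ 2) (2 * t) t := by
    simpa using (hasDerivAt_pow 2 t).const_add 1
  have hq : HasDerivAt (fun y : ℝ => y / (1 + y ^ 2))
      ((1 * (1 + t ^ 2) - t * (2 * t)) / (1 + t ^ 2) ^ 2) t :=
    (hasDerivAt_id t).div hden hne
  have hmul := hq.mul (hasDerivAt_snPdf l t)
  have hG := ((hasDerivAt_snCdf l t).const_sub 1).sub hmul
  refine hG.congr_deriv ?_
  field_simp
  ring

theorem skew_normal_mills_lower_pos (l : ℝ) (hl : 0 < l) (x : ℝ) (hx : 0 < x) :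
    x⁻¹ * (1 + (x ^ 2)⁻¹)⁻¹ < (1 - snCdf l x) / snPdf l x := by
  set F := fun t : ℝ => 1 - snCdf l t - t / (1 + t ^ 2) * snPdf l t with hFdef
  have hD : ∀ t : ℝ, HasDerivAt F (-(2 * snPdf l t / (1 + t ^ 2) ^ 2
      + 2 * l * t * stdPhi t * stdPhi (l * t) / (1 + t ^ 2))) t := hasDerivAt_G l
  have hcont : Continuous F := continuous_iff_continuousAt.2 fun t => (hD t).continuousAt
  have anti : StrictAntiOn F (Set.Ici x) := by
    apply strictAntiOn_of_deriv_neg (convex_Ici x) hcont.continuousOn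
    intro t ht
    rw [interior_Ici] at ht
    rw [(hD t).deriv]
    have ht0 : 0 < t := hx.trans ht
    have h1 := snPdf_pos l t
    have h2 := stdPhi_pos t
    have h3 := stdPhi_pos (l * t)
    have h4 : (0:ℝ) < 1 + t ^ 2 := by positivity
    have h5 : 0 < 2 * snPdf l t / (1 + t ^ 2) ^ 2
        + 2 * l * t * stdPhi t * stdPhi (l * t) / (1 + t ^ 2) := by positivity
    linarith
  have hlim : Tendsto F atTop (𝓝 0) := by
    have ha : Tendsto (fun t => 1 - snCdf l t) atTop (𝓝 0) := by
      have := tendsto_const_nhds (x := (1:ℝ)) (f := atTop) |>.sub (snCdf_tendsto l)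
      simpa using this
    have hb : Tendsto (fun t : ℝ => t / (1 + t ^ 2) * snPdf l t) atTop (𝓝 0) := by
      have hg : Tendsto (fun t : ℝ => 2 * stdPhi t) atTop (𝓝 0) := by
        simpa using stdPhi_tendsto.const_mul 2
      refine squeeze_zero' ?_ ?_ hg
      · filter_upwards [eventually_ge_atTop (0:ℝ)] with t ht
        have h4 : (0:ℝ) < 1 + t ^ 2 := by positivity
        exact mul_nonneg (div_nonneg ht h4.le) (snPdf_pos l t).le
      · filter_upwards [eventually_ge_atTop (0:ℝ)] with t ht
        have h4 : (0:ℝ) < 1 + t ^ 2 := by positivity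
        have hle1 : t / (1 + t ^ 2) ≤ 1 := (div_le_one h4).2 (by nlinarith)
        calc t / (1 + t ^ 2) * snPdf l t ≤ 1 * (2 * stdPhi t) :=
              mul_le_mul hle1 (snPdf_le l t) (snPdf_pos l t).le one_pos.le
          _ = 2 * stdPhi t := one_mul _
    have := ha.sub hb
    simpa using this
  have h2 : 0 ≤ F (x + 1) := by
    refine le_of_tendsto hlim ?_
    filter_upwards [eventually_ge_atTop (x + 1)] with t ht
    rcases eq_or_lt_of_le ht with h | h
    · exact le_of_eq (by rw [h])
    · exact (anti (Set.mem_Ici.2 (by linarith)) (Set.mem_Ici.2 (by linarith)) h).le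
  have hx1 : F (x + 1) < F x :=
    anti Set.self_mem_Ici (Set.mem_Ici.2 (by linarith)) (lt_add_one x)
  have hFx : 0 < F x := lt_of_le_of_lt h2 hx1
  have hf := snPdf_pos l x
  rw [lt_div_iff₀ hf]
  have halg : x⁻¹ * (1 + (x ^ 2)⁻¹)⁻¹ * snPdf l x = x / (1 + x ^ 2) * snPdf l x := by
    have hx2 : (0:ℝ) < 1 + x ^ 2 := by positivity
    field_simp
    ring
  rw [halg]
  have hFx' : 0 < 1 - snCdf l x - x / (1 + x ^ 2) * snPdf l x := hFx
  linarith
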